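/- Let κ < 1/2 be real and m real, and let f_{κ,m}(x) = x^{−1} W_{κ,im}(x) for x > 0, with W_{κ,im} given by its (complex) integral representation. Then f_{κ,m} is twice differentiable on (0,∞) and satisfies the eigenvalue equation −(d/dx)( x² f_{κ,m}'(x) ) + (x/2 − κ)² f_{κ,m}(x) = (1/4 + m² + κ²) f_{κ,m}(x) for all x > 0. -/

import Mathlib

open MeasureTheory Set Filter Complex
open scoped Topology

/-- The Whittaker function `W_{κ,im}(x)` with purely imaginary second index, given by
its complex integral representation (principal-branch powers), valid for `κ < 1/2`
and `x > 0`. -/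
noncomputable def whittakerWI (κ m x : ℝ) : ℂ :=
  (x : ℂ) ^ ((m : ℂ) * Complex.I + 1/2) /
      Complex.Gamma ((m : ℂ) * Complex.I - (κ : ℂ) + 1/2) *
    ∫ s in Ioi (1/2 : ℝ),
      Complex.exp (-(s : ℂ) * (x : ℂ)) *
        ((s : ℂ) + 1/2) ^ ((κ : ℂ) + (m : ℂ) * Complex.I - 1/2) *
        ((s : ℂ) - 1/2) ^ ((m : ℂ) * Complex.I - (κ : ℂ) - 1/2)

namespace Stmt13

/-- integrand -/
noncomputable def K (κ m : ℝ) (n : ℕ) (x s : ℝ) : ℂ :=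
  (s : ℂ) ^ n * Complex.exp (-(s : ℂ) * (x : ℂ)) *
    (((s : ℂ) + 1/2) ^ ((κ : ℂ) + (m : ℂ) * Complex.I - 1/2) *
      ((s : ℂ) - 1/2) ^ ((m : ℂ) * Complex.I - (κ : ℂ) - 1/2))

noncomputable def g (κ m : ℝ) (n : ℕ) (x : ℝ) : ℂ := ∫ s in Ioi (1/2 : ℝ), K κ m n x s

noncomputable def Bnd (p q t : ℝ) (n : ℕ) (s : ℝ) : ℝ :=
  s ^ n * Real.exp (-s * t) * (s + 1/2) ^ p * (s - 1/2) ^ q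

lemma re_aux1 (κ m : ℝ) : ((κ : ℂ) + (m : ℂ) * Complex.I - 1/2).re = κ - 1/2 := by
  simp [Complex.add_re, Complex.sub_re, Complex.mul_re]

lemma re_aux2 (κ m : ℝ) : ((m : ℂ) * Complex.I - (κ : ℂ) - 1/2).re = -κ - 1/2 := by
  simp [Complex.add_re, Complex.sub_re, Complex.mul_re]

lemma norm_K (κ m : ℝ) (n : ℕ) (x : ℝ) {s : ℝ} (hs : 1/2 < s) :
    ‖K κ m n x s‖ = Bnd (κ - 1/2) (-κ - 1/2) x n s := by
  have h0 : (0:ℝ) < s := by linarith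
  have h1 : (0:ℝ) < s + 1/2 := by linarith
  have h2 : (0:ℝ) < s - 1/2 := by linarith
  have e1 : ((s : ℂ) + 1/2) = ((s + 1/2 : ℝ) : ℂ) := by push_cast; ring
  have e2 : ((s : ℂ) - 1/2) = ((s - 1/2 : ℝ) : ℂ) := by push_cast; ring
  have e3 : (-(s : ℂ) * (x : ℂ)) = ((-(s*x) : ℝ) : ℂ) := by push_cast; ring
  rw [K, e1, e2, e3]
  rw [norm_mul, norm_mul, norm_pow]
  simp only [norm_mul, Complex.norm_exp,
    Complex.norm_cpow_eq_rpow_re_of_pos h1, Complex.norm_cpow_eq_rpow_re_of_pos h2,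
    re_aux1, re_aux2, Complex.ofReal_re, Complex.norm_real, Real.norm_eq_abs, abs_of_pos h0]
  rw [Bnd]
  ring

end Stmt13
namespace Stmt13

lemma tendsto_Bnd (p q t : ℝ) (ht : 0 < t) (n : ℕ) :
    Tendsto (Bnd p q t n) atTop (𝓝 0) := by
  have hA : Tendsto (fun s : ℝ => s ^ (n:ℝ) * Real.exp (-(t/3) * s)) atTop (𝓝 0) :=
    tendsto_rpow_mul_exp_neg_mul_atTop_nhds_zero _ _ (by linarith)
  have hB : Tendsto (fun s : ℝ => (s + 1/2) ^ p * Real.exp (-(t/3) * (s + 1/2)))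
      atTop (𝓝 0) :=
    (tendsto_rpow_mul_exp_neg_mul_atTop_nhds_zero p (t/3) (by linarith)).comp
      (tendsto_atTop_add_const_right _ (1/2) tendsto_id)
  have hC : Tendsto (fun s : ℝ => (s - 1/2) ^ q * Real.exp (-(t/3) * (s - 1/2)))
      atTop (𝓝 0) :=
    (tendsto_rpow_mul_exp_neg_mul_atTop_nhds_zero q (t/3) (by linarith)).comp
      (tendsto_atTop_add_const_right _ (-(1/2)) tendsto_id)
  have h := ((hA.mul hB).mul hC).const_mul (Real.exp ((t/3) * (1/2)) * Real.exp (-(t/3) * (1/2)))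
  simp only [mul_zero] at h
  refine h.congr (fun s => ?_)
  rw [Bnd]
  rw [Real.rpow_natCast]
  rw [show Real.exp ((t/3)*(1/2)) * Real.exp (-(t/3)*(1/2)) *
      (s ^ n * Real.exp (-(t/3)*s) * ((s+1/2)^p * Real.exp (-(t/3)*(s+1/2))) *
        ((s-1/2)^q * Real.exp (-(t/3)*(s-1/2)))) =
      s ^ n * (s+1/2)^p * (s-1/2)^q *
        (Real.exp ((t/3)*(1/2)) * Real.exp (-(t/3)*(1/2)) * Real.exp (-(t/3)*s) *
          Real.exp (-(t/3)*(s+1/2)) * Real.exp (-(t/3)*(s-1/2))) from by ring]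
  rw [← Real.exp_add, ← Real.exp_add, ← Real.exp_add, ← Real.exp_add]
  rw [show (t/3)*(1/2) + -(t/3)*(1/2) + -(t/3)*s + -(t/3)*(s+1/2) + -(t/3)*(s-1/2) = -s*t by ring]
  ring

lemma continuousOn_Bnd (p q t : ℝ) (n : ℕ) {U : Set ℝ} (hU : ∀ s ∈ U, 1/2 < s) :
    ContinuousOn (Bnd p q t n) U := by
  intro s hs
  have h2 : (0:ℝ) < s - 1/2 := by have := hU s hs; linarith
  have h1 : (0:ℝ) < s + 1/2 := by linarith
  apply ContinuousAt.continuousWithinAt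
  refine ((((continuous_pow n).continuousAt).mul ?_).mul ?_).mul ?_
  · exact (Real.continuous_exp.comp (by fun_prop)).continuousAt
  · exact (continuousAt_id.add continuousAt_const).rpow_const (Or.inl h1.ne')
  · exact (continuousAt_id.sub continuousAt_const).rpow_const (Or.inl h2.ne')

lemma integrableOn_Bnd {p q : ℝ} (hp : p ≤ 0) (hq : -1 < q) {t : ℝ} (ht : 0 < t) (n : ℕ) :
    IntegrableOn (Bnd p q t n) (Ioi (1/2 : ℝ)) := by
  have key : Ioc (1/2:ℝ) 1 ∪ Ioi (1:ℝ) = Ioi (1/2:ℝ) := Ioc_union_Ioi_eq_Ioi (by norm_num)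
  rw [← key]
  apply IntegrableOn.union
  · -- near 1/2 : compare with (s-1/2)^q
    have hint : IntegrableOn (fun s : ℝ => (s - 1/2) ^ q) (Ioc (1/2:ℝ) 1) := by
      have h1 : IntervalIntegrable (fun u : ℝ => u ^ q) volume 0 (1/2) :=
        intervalIntegral.intervalIntegrable_rpow' hq
      have h2 := h1.comp_sub_right (1/2)
      norm_num at h2
      rwa [intervalIntegrable_iff_integrableOn_Ioc_of_le (by norm_num)] at h2
    refine hint.integrable.mono' ?_ ?_
    · exact (continuousOn_Bnd p q t n (fun s hs => hs.1)).aestronglyMeasurable measurableSet_Ioc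
    · refine (ae_restrict_iff' measurableSet_Ioc).2 (ae_of_all _ fun s hs => ?_)
      have h2 : (0:ℝ) < s - 1/2 := by have := hs.1; linarith
      have h1 : (1:ℝ) ≤ s + 1/2 := by have := hs.1; linarith
      have hs0 : (0:ℝ) < s := by have := hs.1; linarith
      rw [Real.norm_eq_abs, Bnd, _root_.abs_of_nonneg (by positivity)]
      have e1 : s ^ n ≤ 1 := pow_le_one₀ hs0.le hs.2
      have e2 : Real.exp (-s*t) ≤ 1 := Real.exp_le_one_iff.2 (by nlinarith)
      have e3 : (s+1/2)^p ≤ 1 := Real.rpow_le_one_of_one_le_of_nonpos h1 hp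
      have hB : (0:ℝ) ≤ (s-1/2)^q := Real.rpow_nonneg h2.le q
      have hle : s ^ n * Real.exp (-s*t) * (s+1/2)^p ≤ 1 :=
        mul_le_one₀ (mul_le_one₀ e1 (Real.exp_pos _).le e2)
          (Real.rpow_nonneg (by linarith) p) e3
      exact mul_le_of_le_one_left hB hle
  · -- tail : exponential decay
    apply integrable_of_isBigO_exp_neg (half_pos ht)
      (continuousOn_Bnd p q t n (fun s hs => by simp at hs; linarith))
    have hT := tendsto_Bnd p q (t/2) (by linarith) n
    apply Asymptotics.isBigO_of_div_tendsto_nhds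
      (by filter_upwards with s h using absurd h (Real.exp_ne_zero _)) 0
    refine hT.congr fun s => ?_
    rw [Pi.div_apply, eq_div_iff (Real.exp_ne_zero _)]
    rw [Bnd, Bnd, show Real.exp (-s*t) = Real.exp (-s*(t/2)) * Real.exp (-(t/2)*s) by
      rw [← Real.exp_add]; ring_nf]
    ring

end Stmt13
namespace Stmt13

lemma mem_slit {z : ℂ} (h : 0 < z.re) : z ∈ Complex.slitPlane := Or.inl h

lemma continuousOn_K (κ m : ℝ) (n : ℕ) (x : ℝ) :
    ContinuousOn (K κ m n x) (Ioi (1/2 : ℝ)) := by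
  intro s hs
  have hs' : (1/2:ℝ) < s := hs
  apply ContinuousAt.continuousWithinAt
  have hc1 : ContinuousAt (fun s : ℝ => ((s:ℂ) + 1/2) ^ ((κ:ℂ) + (m:ℂ)*Complex.I - 1/2)) s := by
    have hb : ContinuousAt (fun s : ℝ => (s:ℂ) + 1/2) s :=
      (Complex.continuous_ofReal.continuousAt).add continuousAt_const
    refine (continuousAt_cpow_const ?_).comp hb
    exact mem_slit (by simp; linarith)
  have hc2 : ContinuousAt (fun s : ℝ => ((s:ℂ) - 1/2) ^ ((m:ℂ)*Complex.I - (κ:ℂ) - 1/2)) s := by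
    have hb : ContinuousAt (fun s : ℝ => (s:ℂ) - 1/2) s :=
      (Complex.continuous_ofReal.continuousAt).sub continuousAt_const
    refine (continuousAt_cpow_const ?_).comp hb
    exact mem_slit (by simp; linarith)
  have hc3 : ContinuousAt (fun s : ℝ => Complex.exp (-(s:ℂ) * (x:ℂ))) s := by
    apply Complex.continuous_exp.continuousAt.comp
    exact ((Complex.continuous_ofReal.continuousAt).neg.mul continuousAt_const)
  exact (((Complex.continuous_ofReal.continuousAt.pow n).mul hc3).mul (hc1.mul hc2))

lemma integrableOn_K {κ m : ℝ} (hκ : κ < 1/2) (n : ℕ) {x : ℝ} (hx : 0 < x) :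
    IntegrableOn (K κ m n x) (Ioi (1/2 : ℝ)) := by
  refine (integrableOn_Bnd (p := κ - 1/2) (q := -κ - 1/2) (by linarith) (by linarith) hx n).integrable.mono' ?_ ?_
  · exact (continuousOn_K κ m n x).aestronglyMeasurable measurableSet_Ioi
  · refine (ae_restrict_iff' measurableSet_Ioi).2 (ae_of_all _ fun s hs => ?_)
    rw [norm_K κ m n x hs]

lemma hasDerivAt_K (κ m : ℝ) (n : ℕ) (x s : ℝ) :
    HasDerivAt (fun x : ℝ => K κ m n x s) (-K κ m (n+1) x s) x := by
  have h0 : HasDerivAt (fun x : ℝ => ((x : ℝ) : ℂ)) 1 x := (hasDerivAt_id x).ofReal_comp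
  have h1 := ((h0.const_mul (-(s:ℂ))).cexp.const_mul ((s:ℂ)^n)).mul_const
      (((s : ℂ) + 1/2) ^ ((κ : ℂ) + (m : ℂ) * Complex.I - 1/2) *
        ((s : ℂ) - 1/2) ^ ((m : ℂ) * Complex.I - (κ : ℂ) - 1/2))
  refine h1.congr_deriv ?_
  rw [K]
  ring

lemma hasDerivAt_g {κ m : ℝ} (hκ : κ < 1/2) (n : ℕ) {x : ℝ} (hx : 0 < x) :
    HasDerivAt (g κ m n) (-g κ m (n+1) x) x := by
  have hb := hasDerivAt_integral_of_dominated_loc_of_deriv_le (s := Metric.ball x (x/2))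
    (μ := volume.restrict (Ioi (1/2:ℝ)))
    (F := fun x s => K κ m n x s) (F' := fun x s => -K κ m (n+1) x s)
    (x₀ := x) (bound := Bnd (κ - 1/2) (-κ - 1/2) (x/2) (n+1))
    (Metric.ball_mem_nhds x (half_pos hx)) ?_ ?_ ?_ ?_ ?_ ?_
  · have := hb.2
    rw [show (∫ s in Ioi (1/2:ℝ), -K κ m (n+1) x s) = -g κ m (n+1) x by
      rw [g, ← integral_neg]] at this
    exact this
  · filter_upwards with y
    exact (continuousOn_K κ m n y).aestronglyMeasurable measurableSet_Ioi
  · exact integrableOn_K hκ n hx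
  · exact ((continuousOn_K κ m (n+1) x).aestronglyMeasurable measurableSet_Ioi).neg
  · refine (ae_restrict_iff' measurableSet_Ioi).2 (ae_of_all _ fun s hs => ?_)
    intro y hy
    have hs' : (1/2:ℝ) < s := hs
    have hs0 : (0:ℝ) < s := by linarith
    rw [norm_neg, norm_K κ m (n+1) y hs]
    have hy' : x/2 ≤ y := by
      have := Metric.mem_ball.1 hy
      rw [Real.dist_eq] at this
      cases abs_lt.1 this with
      | intro h1 h2 => linarith
    rw [Bnd, Bnd]
    have : Real.exp (-s * y) ≤ Real.exp (-s * (x/2)) := by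
      apply Real.exp_le_exp.2; nlinarith
    gcongr
    all_goals apply Real.rpow_nonneg; linarith
  · exact integrableOn_Bnd (by linarith) (by linarith) (half_pos hx) (n+1)
  · exact ae_of_all _ fun s y hy => hasDerivAt_K κ m n y s

end Stmt13
namespace Stmt13

lemma hasDerivAt_cpowR (d : ℂ) {y : ℝ} (hy : 0 < y) :
    HasDerivAt (fun t : ℝ => (t : ℂ) ^ d) (d * (y : ℂ) ^ d * ((y : ℂ))⁻¹) y := by
  have hlog : HasDerivAt (fun t : ℝ => ((Real.log t : ℝ) : ℂ)) (((y⁻¹ : ℝ) : ℂ)) y :=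
    (Real.hasDerivAt_log hy.ne').ofReal_comp
  have h := (hlog.const_mul d).cexp
  have he : (fun t : ℝ => Complex.exp (d * ((Real.log t : ℝ) : ℂ)))
      =ᶠ[𝓝 y] fun t : ℝ => (t : ℂ) ^ d := by
    filter_upwards [eventually_gt_nhds hy] with t ht
    rw [Complex.cpow_def_of_ne_zero (Complex.ofReal_ne_zero.2 ht.ne'),
      ← Complex.ofReal_log ht.le, mul_comm]
  have h2 := h.congr_of_eventuallyEq he.symm
  refine h2.congr_deriv ?_
  rw [Complex.cpow_def_of_ne_zero (Complex.ofReal_ne_zero.2 hy.ne'),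
    ← Complex.ofReal_log hy.le, mul_comm d]
  push_cast
  ring

lemma hasDerivAt_cpow_shift (c : ℝ) (d : ℂ) {s : ℝ} (h : 0 < s + c) :
    HasDerivAt (fun s : ℝ => ((s + c : ℝ) : ℂ) ^ d)
      (d * ((s + c : ℝ) : ℂ) ^ d * (((s + c : ℝ) : ℂ))⁻¹) s := by
  have hinner : HasDerivAt (fun t : ℝ => t + c) 1 s := by
    simpa using (hasDerivAt_id s).add_const c
  have h3 := (hasDerivAt_cpowR d h).scomp s hinner
  have h4 : ((fun t : ℝ => (t:ℂ) ^ d) ∘ fun t : ℝ => t + c)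
      = fun s : ℝ => ((s + c : ℝ) : ℂ) ^ d := rfl
  rw [h4] at h3
  simpa using h3

lemma re_b1 (κ m : ℝ) : ((m : ℂ) * Complex.I - (κ : ℂ) - 1/2 + 1).re = 1/2 - κ := by
  simp [Complex.add_re, Complex.sub_re, Complex.mul_re]; ring

lemma re_a1 (κ m : ℝ) : ((κ : ℂ) + (m : ℂ) * Complex.I - 1/2 + 1).re = κ + 1/2 := by
  simp [Complex.add_re, Complex.sub_re, Complex.mul_re]; ring

lemma ode_g {κ m : ℝ} (hκ : κ < 1/2) {x : ℝ} (hx : 0 < x) :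
    (x:ℂ) * g κ m 2 x = (2*(m:ℂ)*Complex.I + 1) * g κ m 1 x
      + ((x:ℂ)/4 - (κ:ℂ)) * g κ m 0 x := by
  set F : ℝ → ℂ := fun s => ((s + -(1/2) : ℝ) : ℂ) ^ ((m : ℂ) * Complex.I - (κ : ℂ) - 1/2 + 1) *
      ((s + 1/2 : ℝ) : ℂ) ^ ((κ : ℂ) + (m : ℂ) * Complex.I - 1/2 + 1) *
      Complex.exp (-(s:ℂ) * (x:ℂ)) with hFdef
  set F' : ℝ → ℂ := fun s => -(x:ℂ) * K κ m 2 x s + (2*(m:ℂ)*Complex.I + 1) * K κ m 1 x s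
      + ((x:ℂ)/4 - (κ:ℂ)) * K κ m 0 x s with hF'def
  have hb1 : ((m : ℂ) * Complex.I - (κ : ℂ) - 1/2 + 1) ≠ 0 := by
    intro h
    have := re_b1 κ m
    rw [h] at this
    simp at this
    linarith
  have hderiv : ∀ s ∈ Ioi (1/2:ℝ), HasDerivAt F (F' s) s := by
    intro s hs
    have hs' : (1/2:ℝ) < s := hs
    have hu : (0:ℝ) < s + -(1/2) := by linarith
    have hv : (0:ℝ) < s + 1/2 := by linarith
    have hU := hasDerivAt_cpow_shift (-(1/2)) ((m : ℂ) * Complex.I - (κ : ℂ) - 1/2 + 1) hu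
    have hV := hasDerivAt_cpow_shift (1/2) ((κ : ℂ) + (m : ℂ) * Complex.I - 1/2 + 1) hv
    have hE : HasDerivAt (fun s : ℝ => Complex.exp (-(s:ℂ) * (x:ℂ)))
        (-(x:ℂ) * Complex.exp (-(s:ℂ)*(x:ℂ))) s := by
      have h1 : HasDerivAt (fun s : ℝ => -(s:ℂ) * (x:ℂ)) (-(x:ℂ)) s := by
        simpa [neg_mul] using (((hasDerivAt_id s).ofReal_comp).mul_const (x:ℂ)).fun_neg
      simpa [mul_comm] using h1.cexp
    have e2 : ((s + -(1/2) : ℝ) : ℂ) = (s:ℂ) - 1/2 := by push_cast; ring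
    have e1 : ((s + 1/2 : ℝ) : ℂ) = (s:ℂ) + 1/2 := by push_cast; ring
    have h20 : (s:ℂ) - 1/2 ≠ 0 := by
      rw [← e2]; exact Complex.ofReal_ne_zero.2 hu.ne'
    have h10 : (s:ℂ) + 1/2 ≠ 0 := by
      rw [← e1]; exact Complex.ofReal_ne_zero.2 hv.ne'
    have hU' : HasDerivAt (fun s : ℝ => ((s + -(1/2) : ℝ) : ℂ) ^
        ((m : ℂ) * Complex.I - (κ : ℂ) - 1/2 + 1))
        (((m : ℂ) * Complex.I - (κ : ℂ) - 1/2 + 1) *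
          ((s:ℂ) - 1/2) ^ ((m : ℂ) * Complex.I - (κ : ℂ) - 1/2)) s := by
      convert hU using 1
      rw [e2, Complex.cpow_add _ _ h20, Complex.cpow_one]
      rw [mul_assoc, mul_assoc, mul_inv_cancel₀ h20, mul_one]
    have hV' : HasDerivAt (fun s : ℝ => ((s + 1/2 : ℝ) : ℂ) ^
        ((κ : ℂ) + (m : ℂ) * Complex.I - 1/2 + 1))
        (((κ : ℂ) + (m : ℂ) * Complex.I - 1/2 + 1) *
          ((s:ℂ) + 1/2) ^ ((κ : ℂ) + (m : ℂ) * Complex.I - 1/2)) s := by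
      convert hV using 1
      rw [e1, Complex.cpow_add _ _ h10, Complex.cpow_one]
      rw [mul_assoc, mul_assoc, mul_inv_cancel₀ h10, mul_one]
    have hD := (hU'.mul hV').mul hE
    refine hD.congr_deriv ?_
    simp only [hF'def, K, e1, e2, Pi.mul_apply]
    rw [Complex.cpow_add _ _ h20, Complex.cpow_add _ _ h10, Complex.cpow_one, Complex.cpow_one]
    ring
  have hInt : IntegrableOn F' (Ioi (1/2:ℝ)) :=
    (((integrableOn_K hκ 2 hx).const_mul _).add
      ((integrableOn_K hκ 1 hx).const_mul _)).add ((integrableOn_K hκ 0 hx).const_mul _)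
  have hF12 : F (1/2) = 0 := by
    rw [hFdef]
    norm_num
    exact hb1
  have normF : ∀ s : ℝ, 1/2 < s → ‖F s‖ =
      (s + -(1/2)) ^ (1/2 - κ) * (s + 1/2) ^ (κ + 1/2) * Real.exp (-(s*x)) := by
    intro s hs
    have hu : (0:ℝ) < s + -(1/2) := by linarith
    have hv : (0:ℝ) < s + 1/2 := by linarith
    have e3 : (-(s : ℂ) * (x : ℂ)) = ((-(s*x) : ℝ) : ℂ) := by push_cast; ring
    rw [hFdef]
    simp only [e3, norm_mul, Complex.norm_exp,
      Complex.norm_cpow_eq_rpow_re_of_pos hu, Complex.norm_cpow_eq_rpow_re_of_pos hv,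
      re_b1, re_a1, Complex.ofReal_re]
  have hcont : ContinuousWithinAt F (Ici (1/2:ℝ)) (1/2) := by
    rw [ContinuousWithinAt, hF12]
    have hBc : ContinuousAt (fun s : ℝ =>
        (s + -(1/2)) ^ (1/2 - κ) * (s + 1/2) ^ (κ + 1/2) * Real.exp (-(s*x))) (1/2) := by
      refine ContinuousAt.mul (ContinuousAt.mul ?_ ?_) ?_
      · exact (continuousAt_id.add continuousAt_const).rpow_const (Or.inr (by linarith))
      · exact (continuousAt_id.add continuousAt_const).rpow_const (Or.inl (by norm_num))
      · exact (Real.continuous_exp.comp (by fun_prop)).continuousAt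
    have hB0 : ((1/2:ℝ) + -(1/2)) ^ ((1:ℝ)/2 - κ) * ((1/2:ℝ) + 1/2) ^ (κ + 1/2) *
        Real.exp (-((1/2:ℝ)*x)) = 0 := by
      norm_num
      exact Real.zero_rpow (by linarith)
    apply squeeze_zero_norm' (a := fun s : ℝ =>
        (s + -(1/2)) ^ (1/2 - κ) * (s + 1/2) ^ (κ + 1/2) * Real.exp (-(s*x)))
    · filter_upwards [self_mem_nhdsWithin] with s hs
      rcases eq_or_lt_of_le (mem_Ici.1 hs) with h | h
      · rw [← h, hF12]
        simp only [norm_zero]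
        exact le_of_eq hB0.symm
      · rw [normF s h]
    · have := hBc.continuousWithinAt (s := Ici (1/2:ℝ))
      rw [ContinuousWithinAt, hB0] at this
      exact this
  have htop : Tendsto F atTop (𝓝 0) := by
    apply squeeze_zero_norm' (a := Bnd (κ + 1/2) (1/2 - κ) x 0)
    · filter_upwards [eventually_gt_atTop (1/2:ℝ)] with s hs
      rw [normF s hs, Bnd]
      have hu : (0:ℝ) < s + -(1/2) := by linarith
      rw [show s + -(1/2) = s - 1/2 by ring]
      rw [pow_zero]
      rw [show -(s*x) = -s*x by ring]
      ring_nf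
      exact le_refl _
    · exact tendsto_Bnd (κ + 1/2) (1/2 - κ) x hx 0
  have h0 := integral_Ioi_of_hasDerivAt_of_tendsto hcont hderiv hInt htop
  rw [hF12, sub_zero] at h0
  have hsplit : ∫ s in Ioi (1/2:ℝ), F' s =
      -(x:ℂ) * g κ m 2 x + (2*(m:ℂ)*Complex.I + 1) * g κ m 1 x
        + ((x:ℂ)/4 - (κ:ℂ)) * g κ m 0 x := by
    have i2 : Integrable (fun s : ℝ => -(x:ℂ) * K κ m 2 x s)
        (volume.restrict (Ioi (1/2:ℝ))) := (integrableOn_K hκ 2 hx).const_mul _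
    have i1 : Integrable (fun s : ℝ => (2*(m:ℂ)*Complex.I + 1) * K κ m 1 x s)
        (volume.restrict (Ioi (1/2:ℝ))) := (integrableOn_K hκ 1 hx).const_mul _
    have i0 : Integrable (fun s : ℝ => ((x:ℂ)/4 - (κ:ℂ)) * K κ m 0 x s)
        (volume.restrict (Ioi (1/2:ℝ))) := (integrableOn_K hκ 0 hx).const_mul _
    have i21 : Integrable (fun s : ℝ => -(x:ℂ) * K κ m 2 x s +
        (2*(m:ℂ)*Complex.I + 1) * K κ m 1 x s) (volume.restrict (Ioi (1/2:ℝ))) := i2.add i1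
    simp only [hF'def]
    rw [integral_add i21 i0, integral_add i2 i1,
      integral_const_mul, integral_const_mul, integral_const_mul]
    rfl
  rw [hsplit] at h0
  linear_combination -h0

end Stmt13
namespace Stmt13

lemma re_c (κ m : ℝ) : ((m : ℂ) * Complex.I - (κ : ℂ) + 1/2).re = 1/2 - κ := by
  simp [Complex.add_re, Complex.sub_re, Complex.mul_re]; ring

lemma gamma_ne {κ m : ℝ} (hκ : κ < 1/2) :
    Complex.Gamma ((m:ℂ) * Complex.I - (κ:ℂ) + 1/2) ≠ 0 := by
  apply Complex.Gamma_ne_zero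
  intro n hn
  have h1 := re_c κ m
  rw [hn] at h1
  simp at h1
  have h2 : (0:ℝ) ≤ (n:ℝ) := n.cast_nonneg
  linarith

end Stmt13

open Stmt13 in
/-- `f_{κ,m}(x) = x⁻¹ W_{κ,im}(x)` is an eigenfunction of the Sturm–Liouville operator
`L_{-κ} f = -(x² f')' + (x/2 - κ)² f` with eigenvalue `1/4 + m² + κ²`. -/
theorem stmt_13 (κ m : ℝ) (hκ : κ < 1/2)
    (f : ℝ → ℂ) (hf : ∀ x : ℝ, f x = ((x : ℂ))⁻¹ * whittakerWI κ m x) :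
    (∀ x > (0:ℝ), DifferentiableAt ℝ f x) ∧
    (∀ x > (0:ℝ), DifferentiableAt ℝ (deriv f) x) ∧
    ∀ x > (0:ℝ),
      -deriv (fun u : ℝ => ((u : ℂ)) ^ 2 * deriv f u) x +
          (((x / 2 - κ : ℝ) : ℂ)) ^ 2 * f x =
        (((1/4 + m ^ 2 + κ ^ 2 : ℝ) : ℂ)) * f x := by
  set C : ℂ := (Complex.Gamma ((m:ℂ) * Complex.I - (κ:ℂ) + 1/2))⁻¹ with hCdef
  set c : ℂ := (m:ℂ) * Complex.I - 1/2 with hcdef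
  -- f agrees with an explicit function on (0, ∞)
  have hfeq : ∀ u : ℝ, 0 < u → f u = C * ((u:ℂ) ^ c * g κ m 0 u) := by
    intro u hu
    have hu0 : (u:ℂ) ≠ 0 := Complex.ofReal_ne_zero.2 hu.ne'
    rw [hf u, whittakerWI]
    have hg0 : (∫ s in Ioi (1/2 : ℝ),
        Complex.exp (-(s : ℂ) * (u : ℂ)) *
          ((s : ℂ) + 1/2) ^ ((κ : ℂ) + (m : ℂ) * Complex.I - 1/2) *
          ((s : ℂ) - 1/2) ^ ((m : ℂ) * Complex.I - (κ : ℂ) - 1/2)) = g κ m 0 u := by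
      rw [g]
      congr 1
      funext s
      rw [K]
      ring
    rw [hg0]
    have hexp : ((m:ℂ) * Complex.I + 1/2) = c + 1 := by rw [hcdef]; ring
    rw [hexp, Complex.cpow_add _ _ hu0, Complex.cpow_one]
    rw [div_eq_mul_inv, ← hCdef]
    field_simp [hu0]
  -- derivative of f on (0, ∞)
  have hder : ∀ x : ℝ, 0 < x → HasDerivAt (fun u : ℝ => C * ((u:ℂ) ^ c * g κ m 0 u))
      (C * ((c * (x:ℂ) ^ c * ((x:ℂ))⁻¹) * g κ m 0 x + (x:ℂ) ^ c * -(g κ m 1 x))) x := by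
    intro x hx
    exact ((hasDerivAt_cpowR c hx).mul (hasDerivAt_g hκ 0 hx)).const_mul C
  have hfe : ∀ x : ℝ, 0 < x → f =ᶠ[𝓝 x] fun u : ℝ => C * ((u:ℂ) ^ c * g κ m 0 u) := by
    intro x hx
    filter_upwards [isOpen_Ioi.mem_nhds (show x ∈ Ioi (0:ℝ) from hx)] with u hu
    exact hfeq u hu
  have hdiff : ∀ x > (0:ℝ), DifferentiableAt ℝ f x := by
    intro x hx
    exact ((hfe x hx).differentiableAt_iff).2 (hder x hx).differentiableAt
  have hderivf : ∀ x : ℝ, 0 < x → deriv f x =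
      C * ((c * (x:ℂ) ^ c * ((x:ℂ))⁻¹) * g κ m 0 x + (x:ℂ) ^ c * -(g κ m 1 x)) := by
    intro x hx
    rw [(hfe x hx).deriv_eq]
    exact (hder x hx).deriv
  refine ⟨hdiff, ?_, ?_⟩
  · -- deriv f differentiable
    intro x hx
    have hx0 : (x:ℂ) ≠ 0 := Complex.ofReal_ne_zero.2 hx.ne'
    have hfe' : deriv f =ᶠ[𝓝 x] fun u : ℝ =>
        C * ((c * (u:ℂ) ^ c * ((u:ℂ))⁻¹) * g κ m 0 u + (u:ℂ) ^ c * -(g κ m 1 u)) := by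
      filter_upwards [isOpen_Ioi.mem_nhds (show x ∈ Ioi (0:ℝ) from hx)] with u hu
      exact hderivf u hu
    refine (hfe'.differentiableAt_iff).2 ?_
    have hOf : HasDerivAt (fun u : ℝ => ((u : ℝ) : ℂ)) 1 x := (hasDerivAt_id x).ofReal_comp
    have hinv : HasDerivAt (fun u : ℝ => (((u : ℝ) : ℂ))⁻¹) (-((x:ℂ) ^ 2)⁻¹) x := by
      have h1 : HasDerivAt (fun z : ℂ => z⁻¹) (-((x:ℂ) ^ 2)⁻¹) ((x:ℝ) : ℂ) :=
        hasDerivAt_inv hx0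
      have h2 := h1.scomp x hOf
      simpa [Function.comp_def] using h2
    have T := ((((((hasDerivAt_cpowR c hx).const_mul c).mul hinv).mul
      (hasDerivAt_g (m := m) hκ 0 hx)).add ((hasDerivAt_cpowR c hx).mul
        (hasDerivAt_g (m := m) hκ 1 hx).neg)).const_mul C)
    exact T.differentiableAt
  · -- the eigenvalue equation
    intro x hx
    have hx0 : (x:ℂ) ≠ 0 := Complex.ofReal_ne_zero.2 hx.ne'
    -- the function u ↦ u² f'(u) agrees with h3 on (0,∞)
    have hDeq : (fun u : ℝ => ((u : ℂ)) ^ 2 * deriv f u) =ᶠ[𝓝 x]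
        (fun u : ℝ => C * ((u:ℂ) ^ c * (c * (u:ℂ) * g κ m 0 u - (u:ℂ) ^ 2 * g κ m 1 u))) := by
      filter_upwards [isOpen_Ioi.mem_nhds (show x ∈ Ioi (0:ℝ) from hx)] with u hu
      have hu0 : (u:ℂ) ≠ 0 := Complex.ofReal_ne_zero.2 (ne_of_gt hu)
      rw [hderivf u hu]
      field_simp
      ring
    have hOf : HasDerivAt (fun u : ℝ => ((u : ℝ) : ℂ)) 1 x := (hasDerivAt_id x).ofReal_comp
    have hsq : HasDerivAt (fun u : ℝ => ((u : ℝ) : ℂ) ^ 2) (2 * (x:ℂ)) x := by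
      have h2 := hOf.mul hOf
      rw [show (fun u : ℝ => ((u : ℝ) : ℂ) ^ 2) = (fun u : ℝ => ((u : ℝ) : ℂ) * ((u : ℝ) : ℂ))
        from funext fun u => pow_two _]
      refine h2.congr_deriv ?_
      ring
    have hQ : HasDerivAt (fun u : ℝ => c * (u:ℂ) * g κ m 0 u - (u:ℂ) ^ 2 * g κ m 1 u)
        ((c * 1) * g κ m 0 x + (c * (x:ℂ)) * -(g κ m 1 x) -
          ((2 * (x:ℂ)) * g κ m 1 x + (x:ℂ) ^ 2 * -(g κ m 2 x))) x := by
      have h1 := ((hOf.const_mul c).mul (hasDerivAt_g (m := m) hκ 0 hx))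
      have h2 := (hsq.mul (hasDerivAt_g (m := m) hκ 1 hx))
      exact h1.sub h2
    have hH3raw := ((hasDerivAt_cpowR c hx).mul hQ).const_mul C
    have hH3 : HasDerivAt
        (fun u : ℝ => C * ((u:ℂ) ^ c * (c * (u:ℂ) * g κ m 0 u - (u:ℂ) ^ 2 * g κ m 1 u)))
        (C * (c * (x:ℂ) ^ c * (c * g κ m 0 x - (x:ℂ) * g κ m 1 x) +
          (x:ℂ) ^ c * (c * g κ m 0 x - c * (x:ℂ) * g κ m 1 x - 2 * (x:ℂ) * g κ m 1 x +
            (x:ℂ) ^ 2 * g κ m 2 x))) x := by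
      refine hH3raw.congr_deriv ?_
      field_simp
      ring
    have hDx : deriv (fun u : ℝ => ((u : ℂ)) ^ 2 * deriv f u) x =
        C * (c * (x:ℂ) ^ c * (c * g κ m 0 x - (x:ℂ) * g κ m 1 x) +
          (x:ℂ) ^ c * (c * g κ m 0 x - c * (x:ℂ) * g κ m 1 x - 2 * (x:ℂ) * g κ m 1 x +
            (x:ℂ) ^ 2 * g κ m 2 x)) := by
      rw [hDeq.deriv_eq]
      exact hH3.deriv
    rw [hDx, hfeq x hx]
    have ode := ode_g (m := m) hκ hx
    push_cast
    rw [hcdef]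
    linear_combination (-(C * (x:ℂ) ^ c * (x:ℂ))) * ode +
      (-(C * (m:ℂ) ^ 2 * (x:ℂ) ^ c * g κ m 0 x)) * Complex.I_sq
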